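/- Let Q₁ and Q₂ be nonnegative quadratic forms on ℝᵈ such that every zero of Q₁ is a zero of Q₂ (i.e., Q₁(x) = 0 implies Q₂(x) = 0 for all x ∈ ℝᵈ). Then there exists a real number α > 0 such that Q₁(x) ≥ α · Q₂(x) for all x ∈ ℝᵈ. -/

import Mathlib

open Matrix

lemma aux_matrix_bound (d : ℕ) (A : Matrix (Fin d) (Fin d) ℝ) :
    ∃ C : ℝ, 0 ≤ C ∧ ∀ v : Fin d → ℝ, (A *ᵥ v) ⬝ᵥ (A *ᵥ v) ≤ C * (v ⬝ᵥ v) := by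
  refine ⟨∑ i, ∑ j, A i j ^ 2, by positivity, fun v => ?_⟩
  simp only [dotProduct, mulVec]
  rw [Finset.sum_mul]
  apply Finset.sum_le_sum
  intro i _
  have h := Finset.sum_mul_sq_le_sq_mul_sq Finset.univ (fun j => A i j) v
  calc (fun j => A i j) ⬝ᵥ v * ((fun j => A i j) ⬝ᵥ v)
      = (∑ j, A i j * v j) ^ 2 := by rw [sq]; rfl
    _ ≤ (∑ j, A i j ^ 2) * ∑ j, v j ^ 2 := h
    _ = (∑ j, A i j ^ 2) * ∑ j, v j * v j := by simp_rw [sq]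

lemma aux_exists_factor {d : ℕ} (f g : (Fin d → ℝ) →ₗ[ℝ] (Fin d → ℝ))
    (h : LinearMap.ker f ≤ LinearMap.ker g) :
    ∃ L : (Fin d → ℝ) →ₗ[ℝ] (Fin d → ℝ), g = L ∘ₗ f := by
  let e := f.quotKerEquivRange
  let h₀ : LinearMap.range f →ₗ[ℝ] (Fin d → ℝ) :=
    (Submodule.liftQ (LinearMap.ker f) g h) ∘ₗ e.symm.toLinearMap
  obtain ⟨L, hL⟩ := h₀.exists_extend
  refine ⟨L, LinearMap.ext fun x => ?_⟩
  have h1 : (⟨f x, LinearMap.mem_range_self f x⟩ : LinearMap.range f)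
      = e (Submodule.Quotient.mk x) := by
    ext
    simp [e, LinearMap.quotKerEquivRange_apply_mk]
  have h2 : L (f x) = h₀ ⟨f x, LinearMap.mem_range_self f x⟩ := by
    rw [← hL]; rfl
  rw [LinearMap.comp_apply, h2, h1]
  simp [h₀, e]

open scoped MatrixOrder in
noncomputable def Matrix.PosSemidef.sqrt {n : Type*} [Fintype n] [DecidableEq n] {M : Matrix n n ℝ}
    (_hM : M.PosSemidef) : Matrix n n ℝ := CFC.sqrt M

open scoped MatrixOrder in
lemma Matrix.PosSemidef.sq_sqrt {n : Type*} [Fintype n] [DecidableEq n] {M : Matrix n n ℝ}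
    (hM : M.PosSemidef) : hM.sqrt ^ 2 = M := CFC.sq_sqrt M hM.nonneg

open scoped MatrixOrder in
lemma Matrix.PosSemidef.posSemidef_sqrt {n : Type*} [Fintype n] [DecidableEq n] {M : Matrix n n ℝ}
    (hM : M.PosSemidef) : hM.sqrt.PosSemidef := (CFC.sqrt_nonneg M).posSemidef

/-- If `Q₁ (x) = xᵀ M₁ x` and `Q₂ (x) = xᵀ M₂ x` are nonnegative quadratic forms on
`ℝᵈ` and every zero of `Q₁` is a zero of `Q₂`, then `Q₁ ≥ α Q₂` for some `α > 0`. -/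
theorem nonneg_quadratic_dominates_of_zeros_subset
    (d : ℕ) (M₁ M₂ : Matrix (Fin d) (Fin d) ℝ)
    (hs₁ : M₁.IsSymm) (hs₂ : M₂.IsSymm)
    (hn₁ : ∀ x : Fin d → ℝ, 0 ≤ x ⬝ᵥ M₁.mulVec x)
    (hn₂ : ∀ x : Fin d → ℝ, 0 ≤ x ⬝ᵥ M₂.mulVec x)
    (hz : ∀ x : Fin d → ℝ, x ⬝ᵥ M₁.mulVec x = 0 → x ⬝ᵥ M₂.mulVec x = 0) :
    ∃ α : ℝ, 0 < α ∧ ∀ x : Fin d → ℝ, α * (x ⬝ᵥ M₂.mulVec x) ≤ x ⬝ᵥ M₁.mulVec x := by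
  have h₁ : M₁.PosSemidef := by
    refine .of_dotProduct_mulVec_nonneg ?_ fun x => by simpa using hn₁ x
    rwa [Matrix.IsHermitian, conjTranspose_eq_transpose_of_trivial]
  have h₂ : M₂.PosSemidef := by
    refine .of_dotProduct_mulVec_nonneg ?_ fun x => by simpa using hn₂ x
    rwa [Matrix.IsHermitian, conjTranspose_eq_transpose_of_trivial]
  set B₁ := h₁.sqrt with hB₁def
  set B₂ := h₂.sqrt with hB₂def
  -- key identities : x ⬝ᵥ Mᵢ *ᵥ x = (Bᵢ *ᵥ x) ⬝ᵥ (Bᵢ *ᵥ x)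
  have key : ∀ (M : Matrix (Fin d) (Fin d) ℝ) (hM : M.PosSemidef) (x : Fin d → ℝ),
      x ⬝ᵥ M *ᵥ x = (hM.sqrt *ᵥ x) ⬝ᵥ (hM.sqrt *ᵥ x) := by
    intro M hM x
    have hsq : hM.sqrt * hM.sqrt = M := by
      have h := hM.sq_sqrt
      rwa [pow_two] at h
    have hsymm : hM.sqrtᵀ = hM.sqrt := by
      have h := hM.posSemidef_sqrt.isHermitian
      rwa [Matrix.IsHermitian, conjTranspose_eq_transpose_of_trivial] at h
    have hmv : M *ᵥ x = hM.sqrt *ᵥ (hM.sqrt *ᵥ x) := by rw [mulVec_mulVec, hsq]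
    have hvm : x ᵥ* hM.sqrt = hM.sqrt *ᵥ x := by rw [← mulVec_transpose, hsymm]
    rw [hmv, dotProduct_mulVec, hvm]
  -- kernel inclusion
  have hker : LinearMap.ker B₁.mulVecLin ≤ LinearMap.ker B₂.mulVecLin := by
    intro x hx
    rw [LinearMap.mem_ker, mulVecLin_apply] at hx ⊢
    have hq1 : x ⬝ᵥ M₁ *ᵥ x = 0 := by rw [key M₁ h₁ x, ← hB₁def, hx, dotProduct_zero]
    have hq2 := hz x hq1
    rw [key M₂ h₂ x, ← hB₂def, dotProduct_self_eq_zero] at hq2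
    exact hq2
  obtain ⟨L, hL⟩ := aux_exists_factor B₁.mulVecLin B₂.mulVecLin hker
  obtain ⟨C, hC0, hC⟩ := aux_matrix_bound d (LinearMap.toMatrix' L)
  have hfac : ∀ x : Fin d → ℝ, B₂ *ᵥ x = (LinearMap.toMatrix' L) *ᵥ (B₁ *ᵥ x) := by
    intro x
    have hA : ∀ y : Fin d → ℝ, (LinearMap.toMatrix' L) *ᵥ y = L y := fun y => by
      rw [← Matrix.toLin'_apply, Matrix.toLin'_toMatrix']
    have h : B₂.mulVecLin x = L (B₁.mulVecLin x) := by rw [hL]; rfl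
    rw [mulVecLin_apply, mulVecLin_apply] at h
    rw [h, hA]
  refine ⟨1 / (C + 1), by positivity, fun x => ?_⟩
  have hb : x ⬝ᵥ M₂ *ᵥ x ≤ C * (x ⬝ᵥ M₁ *ᵥ x) := by
    rw [key M₂ h₂ x, key M₁ h₁ x, ← hB₁def, ← hB₂def, hfac x]
    exact hC (B₁ *ᵥ x)
  have h1 := hn₁ x
  have h2 := hn₂ x
  rw [div_mul_eq_mul_div, div_le_iff₀ (by positivity)]
  nlinarith [mul_nonneg hC0 h1]
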